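/- For every graph G with m ≥ 1 edges and without isolated vertices, the Ramsey number satisfies r(K_3, G) ≤ 3m. -/

import Mathlib

open SimpleGraph

/-- `G.ContainsCopy H` means the graph `G` contains a subgraph isomorphic to `H`,
i.e. there is an injective graph homomorphism from `H` into `G`. -/
def SimpleGraph.ContainsCopy {α β : Type*} (G : SimpleGraph α) (H : SimpleGraph β) : Prop :=
  ∃ f : H →g G, Function.Injective f

/-- `RamseyProp n H G` : every graph `Γ` on `n` vertices contains a copy of `H`,
or its complement contains a copy of `G`. -/
def RamseyProp {α β : Type*} (n : ℕ) (H : SimpleGraph α) (G : SimpleGraph β) : Prop :=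
  ∀ Γ : SimpleGraph (Fin n), Γ.ContainsCopy H ∨ Γᶜ.ContainsCopy G

/-- The Ramsey number `r(H, G)` : the least positive `n` such that every graph on `n`
vertices contains a copy of `H` or its complement contains a copy of `G`. -/
noncomputable def ramseyNumber {α β : Type*} (H : SimpleGraph α) (G : SimpleGraph β) : ℕ :=
  sInf {n : ℕ | 0 < n ∧ RamseyProp n H G}

private lemma indep_of_cf {W : Type*} [DecidableEq W] {Γ : SimpleGraph W} (hΓ : Γ.CliqueFree 3)
    {z a b : W} (hza : Γ.Adj z a) (hzb : Γ.Adj z b) : ¬ Γ.Adj a b := by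
  intro h
  exact hΓ {z, a, b} (SimpleGraph.is3Clique_triple_iff.2 ⟨hza, hzb, h⟩)

private lemma exists_nonedge {W : Type*} [DecidableEq W] {Γ : SimpleGraph W} (hΓ : Γ.CliqueFree 3)
    {S : Finset W} (hS : 3 ≤ S.card) : ∃ x ∈ S, ∃ y ∈ S, x ≠ y ∧ ¬ Γ.Adj x y := by
  obtain ⟨a, b, c, ha, hb, hc, hab, hac, hbc⟩ := Finset.two_lt_card_iff.1 hS
  by_contra h
  push_neg at h
  exact hΓ {a, b, c} (SimpleGraph.is3Clique_triple_iff.2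
    ⟨h a ha b hb hab, h a ha c hc hac, h b hb c hc hbc⟩)

private lemma exists_avoid {W : Type*} {S F : Finset W} (h : F.card < S.card) :
    ∃ y ∈ S, y ∉ F := by
  by_contra hc
  push_neg at hc
  exact absurd (Finset.card_le_card fun y hy => hc y hy) (not_le.2 h)

private lemma key (m : ℕ) : ∀ {V W : Type} [Fintype V] [Fintype W] [Nonempty W]
    (G : SimpleGraph V) (Γ : SimpleGraph W), Γ.CliqueFree 3 →
    ∀ S : Finset W, G.edgeSet.ncard = m → 3 * m ≤ S.card →
    ∃ f : V → W, Set.InjOn f G.support ∧ (∀ v ∈ G.support, f v ∈ S) ∧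
      ∀ ⦃a b⦄, G.Adj a b → ¬ Γ.Adj (f a) (f b) := by
  induction m using Nat.strong_induction_on with
  | _ m IH =>
  intro V W _ _ _ G Γ hΓ S hm hS
  classical
  rcases Nat.eq_zero_or_pos m with hm0 | hmpos
  · -- m = 0 : empty support
    obtain rfl := hm0.symm
    have hE : G.edgeSet = ∅ := (Set.ncard_eq_zero (G.edgeSet.toFinite)).1 hm
    have hnadj : ∀ a b, ¬ G.Adj a b := by
      intro a b hab
      have : s(a, b) ∈ G.edgeSet := hab
      simp [hE] at this
    have hsup : G.support = ∅ := by
      ext v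
      simp only [SimpleGraph.mem_support, Set.mem_empty_iff_false, iff_false, not_exists]
      exact fun w => hnadj v w
    exact ⟨fun _ => Classical.arbitrary W, by simp [hsup], by simp [hsup],
      fun a b hab => absurd hab (hnadj a b)⟩
  -- m ≥ 1
  have hmf : G.edgeFinset.card = m := by
    rw [← hm, ← Set.ncard_coe_finset, SimpleGraph.coe_edgeFinset]
  set sup : Finset V := G.support.toFinset with hsupdef
  have hmemsup : ∀ {v : V}, v ∈ sup ↔ ∃ w, G.Adj v w := by
    intro v; rw [hsupdef, Set.mem_toFinset, SimpleGraph.mem_support]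
  have hdegpos : ∀ v ∈ sup, 1 ≤ G.degree v := by
    intro v hv
    obtain ⟨w, hw⟩ := hmemsup.1 hv
    exact Finset.card_pos.2 ⟨w, (SimpleGraph.mem_neighborFinset G v w).2 hw⟩
  have hdeg0 : ∀ v, v ∉ sup → G.degree v = 0 := by
    intro v hv
    have hnb : G.neighborFinset v = ∅ := by
      ext w
      simp only [SimpleGraph.mem_neighborFinset, Finset.notMem_empty, iff_false]
      exact fun h => hv (hmemsup.2 ⟨w, h⟩)
    simp only [SimpleGraph.degree, hnb, Finset.card_empty]
  have hsum : ∑ v ∈ sup, G.degree v = 2 * m := by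
    rw [← hmf, ← SimpleGraph.sum_degrees_eq_twice_card_edges]
    exact Finset.sum_subset (Finset.subset_univ _) (fun v _ hv => hdeg0 v hv)
  by_cases hK2 : ∃ u v, G.Adj u v ∧ G.degree u = 1 ∧ G.degree v = 1
  · obtain ⟨u, v, huv, hdu, hdv⟩ := hK2
    have huniq : ∀ {x y b : V}, G.degree x = 1 → G.Adj x y → G.Adj x b → b = y := by
      intro x y b hdx hxy hxb
      obtain ⟨c, hc⟩ := Finset.card_eq_one.1 (hdx : (G.neighborFinset x).card = 1)
      have hy := (SimpleGraph.mem_neighborFinset G x y).2 hxy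
      have hb := (SimpleGraph.mem_neighborFinset G x b).2 hxb
      rw [hc, Finset.mem_singleton] at hy hb
      rw [hb, hy]
    obtain ⟨x, hx, y, hy, hxy, hnadj⟩ := exists_nonedge hΓ (le_trans (by omega) hS)
    set G' := G.deleteEdges {s(u, v)} with hG'
    have hmG' : G'.edgeSet.ncard = m - 1 := by
      rw [hG', SimpleGraph.edgeSet_deleteEdges,
        Set.ncard_diff_singleton_of_mem (G.mem_edgeSet.2 huv), hm]
    have hcount : 3 * (m - 1) ≤ (S \ ({x, y} : Finset W)).card := by
      have h1 := Finset.card_le_card_sdiff_add_card (s := S) (t := ({x, y} : Finset W))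
      have h2 : ({x, y} : Finset W).card ≤ 2 := (Finset.card_insert_le _ _).trans (by simp)
      omega
    obtain ⟨f', hinj', hmem', hadj'⟩ := IH (m - 1) (by omega) G' Γ hΓ (S \ {x, y}) hmG' hcount
    have hadjG' : ∀ {a b : V}, G'.Adj a b ↔ G.Adj a b ∧ s(a, b) ≠ s(u, v) := by
      intro a b
      rw [hG', SimpleGraph.deleteEdges_adj]
      simp
    have hu_only : ∀ {b}, G.Adj u b → b = v := fun hb => huniq hdu huv hb
    have hv_only : ∀ {b}, G.Adj v b → b = u := fun hb => huniq hdv huv.symm hb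
    have hsupG' : ∀ {a : V}, a ∈ G'.support ↔ a ∈ G.support ∧ a ≠ u ∧ a ≠ v := by
      intro a
      constructor
      · rintro ⟨b, hb⟩
        obtain ⟨hab, hne⟩ := hadjG'.1 hb
        refine ⟨⟨b, hab⟩, ?_, ?_⟩
        · rintro rfl; exact hne (by rw [hu_only hab])
        · rintro rfl; exact hne (by rw [hv_only hab, Sym2.eq_swap])
      · rintro ⟨⟨b, hab⟩, hau, hav⟩
        refine ⟨b, hadjG'.2 ⟨hab, ?_⟩⟩
        intro he
        rcases Sym2.eq_iff.1 he with ⟨h1, h2⟩ | ⟨h1, h2⟩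
        · exact hau h1
        · exact hav h1
    have hf'S : ∀ {t}, t ∈ G'.support → f' t ∈ S ∧ f' t ≠ x ∧ f' t ≠ y := by
      intro t ht
      obtain ⟨h1, h2⟩ := Finset.mem_sdiff.1 (hmem' t ht)
      simp only [Finset.mem_insert, Finset.mem_singleton, not_or] at h2
      exact ⟨h1, h2.1, h2.2⟩
    refine ⟨fun t => if t = u then x else if t = v then y else f' t, ?_, ?_, ?_⟩
    all_goals
      have hfu : (fun t => if t = u then x else if t = v then y else f' t) u = x := by
        simp
      have hfv : (fun t => if t = u then x else if t = v then y else f' t) v = y := by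
        simp [huv.ne']
      have hfo : ∀ {t}, t ≠ u → t ≠ v →
          (fun t => if t = u then x else if t = v then y else f' t) t = f' t := by
        intro t h1 h2; simp [h1, h2]
    · -- InjOn
      intro a ha b hb hfe
      simp only [] at hfe
      by_cases hau : a = u
      · obtain rfl := hau.symm
        by_cases hbu : b = u
        · exact hbu.symm
        · by_cases hbv : b = v
          · obtain rfl := hbv.symm
            rw [if_pos rfl, if_neg hbu, if_pos rfl] at hfe
            exact absurd hfe hxy
          · have hb' : b ∈ G'.support := hsupG'.2 ⟨hb, hbu, hbv⟩
            rw [if_pos rfl, if_neg hbu, if_neg hbv] at hfe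
            exact absurd hfe.symm (hf'S hb').2.1
      · by_cases hav : a = v
        · obtain rfl := hav.symm
          by_cases hbv : b = v
          · exact hbv.symm
          · by_cases hbu : b = u
            · obtain rfl := hbu.symm
              rw [if_neg hau, if_pos rfl, if_pos rfl] at hfe
              exact absurd hfe.symm hxy
            · have hb' : b ∈ G'.support := hsupG'.2 ⟨hb, hbu, hbv⟩
              rw [if_neg hau, if_pos rfl, if_neg hbu, if_neg hbv] at hfe
              exact absurd hfe.symm (hf'S hb').2.2
        · have ha' : a ∈ G'.support := hsupG'.2 ⟨ha, hau, hav⟩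
          by_cases hbu : b = u
          · obtain rfl := hbu.symm
            rw [if_neg hau, if_neg hav, if_pos rfl] at hfe
            exact absurd hfe (hf'S ha').2.1
          · by_cases hbv : b = v
            · obtain rfl := hbv.symm
              rw [if_neg hau, if_neg hav, if_neg hbu, if_pos rfl] at hfe
              exact absurd hfe (hf'S ha').2.2
            · have hb' : b ∈ G'.support := hsupG'.2 ⟨hb, hbu, hbv⟩
              rw [if_neg hau, if_neg hav, if_neg hbu, if_neg hbv] at hfe
              exact hinj' ha' hb' hfe
    · -- mem S
      intro t ht
      by_cases h1 : t = u
      · subst h1; rw [hfu]; exact hx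
      · by_cases h2 : t = v
        · subst h2; rw [hfv]; exact hy
        · rw [hfo h1 h2]
          exact (hf'S (hsupG'.2 ⟨ht, h1, h2⟩)).1
    · -- adjacency
      intro a b hab
      by_cases hau : a = u
      · obtain rfl := hau.symm
        have hbv : b = v := hu_only hab
        obtain rfl := hbv.symm
        rw [hfu, hfv]
        exact hnadj
      · by_cases hav : a = v
        · obtain rfl := hav.symm
          have hbu : b = u := hv_only hab
          obtain rfl := hbu.symm
          rw [hfv, hfu]
          exact fun h => hnadj h.symm
        · have hbu : b ≠ u := by rintro rfl; exact hav (hu_only hab.symm)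
          have hbv : b ≠ v := by rintro rfl; exact hau (hv_only hab.symm)
          have hG'ab : G'.Adj a b := hadjG'.2 ⟨hab, fun he => by
            rcases Sym2.eq_iff.1 he with ⟨h1, h2⟩ | ⟨h1, h2⟩
            exacts [hau h1, hav h1]⟩
          rw [hfo hau hav, hfo hbu hbv]
          exact hadj' hG'ab
  push_neg at hK2
  set p := sup.card with hpdef
  by_cases hbig : ∃ z ∈ S, p ≤ (Γ.neighborFinset z ∩ S).card
  · obtain ⟨z, hzS, hzcard⟩ := hbig
    have hmem2 : ∀ {v : V}, v ∈ G.support → v ∈ sup :=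
      fun hv => hmemsup.2 ((SimpleGraph.mem_support G).1 hv)
    have hTind : ∀ {a b : W}, a ∈ Γ.neighborFinset z ∩ S → b ∈ Γ.neighborFinset z ∩ S →
        ¬ Γ.Adj a b := by
      intro a b ha hb
      exact indep_of_cf hΓ ((SimpleGraph.mem_neighborFinset Γ z a).1 (Finset.mem_inter.1 ha).1)
        ((SimpleGraph.mem_neighborFinset Γ z b).1 (Finset.mem_inter.1 hb).1)
    have hcard : Fintype.card { x // x ∈ sup } ≤
        Fintype.card { x // x ∈ Γ.neighborFinset z ∩ S } := by
      rw [Fintype.card_coe, Fintype.card_coe]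
      exact hzcard
    obtain ⟨e⟩ := Function.Embedding.nonempty_of_card_le hcard
    refine ⟨fun v => if h : v ∈ sup then ((e ⟨v, h⟩ : { x // x ∈ Γ.neighborFinset z ∩ S }) : W)
      else Classical.arbitrary W, ?_, ?_, ?_⟩
    · intro a ha b hb hfe
      have ha' : a ∈ sup := hmem2 ha
      have hb' : b ∈ sup := hmem2 hb
      simp only [dif_pos ha', dif_pos hb'] at hfe
      exact congrArg Subtype.val (e.injective (Subtype.ext hfe))
    · intro v hv
      have hv' : v ∈ sup := hmem2 hv
      simp only [dif_pos hv']
      exact (Finset.mem_inter.1 (e ⟨v, hv'⟩).2).2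
    · intro a b hab
      have ha' : a ∈ sup := hmemsup.2 ⟨b, hab⟩
      have hb' : b ∈ sup := hmemsup.2 ⟨a, hab.symm⟩
      simp only [dif_pos ha', dif_pos hb']
      exact hTind (e ⟨a, ha'⟩).2 (e ⟨b, hb'⟩).2
  push_neg at hbig
  have hmem2 : ∀ {v : V}, v ∈ G.support → v ∈ sup :=
    fun hv => hmemsup.2 ((SimpleGraph.mem_support G).1 hv)
  have hsupne : sup.Nonempty := by
    have hpos : 0 < G.edgeFinset.card := by omega
    obtain ⟨e, he⟩ := Finset.card_pos.1 hpos
    induction e using Sym2.inductionOn with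
    | hf a b =>
      exact ⟨a, hmemsup.2 ⟨b, G.mem_edgeSet.1 (SimpleGraph.mem_edgeFinset.1 he)⟩⟩
  obtain ⟨w, hw, hwmin⟩ := Finset.exists_min_image sup (fun v => G.degree v) hsupne
  set d := G.degree w with hddef
  have hd1 : 1 ≤ d := hdegpos w hw
  have hp1 : 1 ≤ p := Finset.card_pos.2 ⟨w, hw⟩
  have hnb2 : ∀ {b : V}, G.Adj w b → 2 ≤ G.degree b := by
    intro b hb
    have hbs : b ∈ sup := hmemsup.2 ⟨w, hb.symm⟩
    have h1 := hdegpos b hbs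
    rcases Nat.lt_or_ge d 2 with h | h
    · have hdw : G.degree w = 1 := by omega
      have := hK2 w b hb hdw
      omega
    · exact le_trans h (hwmin b hbs)
  set G' := G.deleteEdges (G.incidenceSet w) with hG'
  have hinc : (G.incidenceSet w).ncard = d := by
    rw [hddef, ← G.card_incidenceSet_eq_degree (v := w), Set.ncard_eq_toFinset_card']
    exact Set.toFinset_card _
  have hmG' : G'.edgeSet.ncard = m - d := by
    rw [hG', SimpleGraph.edgeSet_deleteEdges,
      Set.ncard_diff (G.incidenceSet_subset w), hm, hinc]
  have h3md : 3 * (m - d) ≤ S.card := le_trans (by omega) hS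
  obtain ⟨f', hinj', hmem', hadj'⟩ := IH (m - d) (by omega) G' Γ hΓ S hmG' h3md
  have hadjG' : ∀ {a b : V}, G'.Adj a b ↔ G.Adj a b ∧ a ≠ w ∧ b ≠ w := by
    intro a b
    rw [hG', SimpleGraph.deleteEdges_adj]
    constructor
    · rintro ⟨hab, hni⟩
      refine ⟨hab, ?_, ?_⟩
      · rintro rfl; exact hni (G.mk'_mem_incidenceSet_left_iff.2 hab)
      · rintro rfl; exact hni (G.mk'_mem_incidenceSet_right_iff.2 hab)
    · rintro ⟨hab, haw, hbw⟩
      refine ⟨hab, fun hni => ?_⟩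
      rcases (G.mk'_mem_incidenceSet_iff).1 hni with ⟨-, h | h⟩
      · exact haw h.symm
      · exact hbw h.symm
  have hsupG' : ∀ {a : V}, a ∈ G'.support ↔ a ∈ G.support ∧ a ≠ w := by
    intro a
    constructor
    · rintro ⟨b, hb⟩
      obtain ⟨hab, haw, hbw⟩ := hadjG'.1 hb
      exact ⟨⟨b, hab⟩, haw⟩
    · rintro ⟨⟨b, hab⟩, haw⟩
      by_cases hbw : b = w
      · obtain rfl := hbw.symm
        have h2 : 2 ≤ G.degree a := hnb2 hab.symm
        have h2' : 1 < (G.neighborFinset a).card := h2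
        obtain ⟨c, hc, hcw⟩ := Finset.exists_mem_ne h2' w
        exact ⟨c, hadjG'.2 ⟨(SimpleGraph.mem_neighborFinset G a c).1 hc, haw, hcw⟩⟩
      · exact ⟨b, hadjG'.2 ⟨hab, haw, hbw⟩⟩
  set F := ((sup.erase w).image f') ∪
    (G.neighborFinset w).biUnion (fun b => Γ.neighborFinset (f' b) ∩ S) with hF
  have hf'mem : ∀ {b : V}, G.Adj w b → f' b ∈ S := by
    intro b hb
    exact hmem' b (hsupG'.2 ⟨⟨w, hb.symm⟩, fun h => G.irrefl (h ▸ hb)⟩)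
  have hFcard : F.card ≤ (p - 1) + d * (p - 1) := by
    refine le_trans (Finset.card_union_le _ _) (Nat.add_le_add ?_ ?_)
    · exact le_trans Finset.card_image_le (by rw [Finset.card_erase_of_mem hw])
    · refine le_trans Finset.card_biUnion_le ?_
      have hterm : ∀ b ∈ G.neighborFinset w, (Γ.neighborFinset (f' b) ∩ S).card ≤ p - 1 := by
        intro b hb
        have := hbig (f' b) (hf'mem ((SimpleGraph.mem_neighborFinset G w b).1 hb))
        omega
      calc ∑ b ∈ G.neighborFinset w, (Γ.neighborFinset (f' b) ∩ S).card
          ≤ ∑ _b ∈ G.neighborFinset w, (p - 1) := Finset.sum_le_sum hterm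
        _ = d * (p - 1) := by
          rw [Finset.sum_const, smul_eq_mul, hddef]
          rfl
  have hdp : d * p ≤ 2 * m := by
    have h1 : p • d ≤ ∑ v ∈ sup, G.degree v :=
      Finset.card_nsmul_le_sum sup _ d (fun v hv => hwmin v hv)
    rw [hsum, smul_eq_mul] at h1
    calc d * p = p * d := Nat.mul_comm _ _
      _ ≤ 2 * m := h1
  have hkey : (p - 1) + d * (p - 1) < 3 * m := by
    rcases Nat.lt_or_ge d 2 with hd | hd
    · -- d = 1 : use pendant counting
      have hd1' : d = 1 := by omega
      set nb : V → V := fun v => if h : ∃ u, G.Adj v u then h.choose else v with hnbdef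
      have hnb : ∀ {v : V}, v ∈ sup → G.Adj v (nb v) := by
        intro v hv
        have h := hmemsup.1 hv
        rw [hnbdef]
        simp only [dif_pos h]
        exact h.choose_spec
      set t := (sup.filter (fun v => G.degree v = 1)).card with htdef
      have htp : t ≤ p := Finset.card_filter_le _ _
      have htm : t ≤ m := by
        rw [htdef, ← hmf]
        refine Finset.card_le_card_of_injOn (fun v => s(v, nb v)) ?_ ?_
        · intro v hv
          obtain ⟨hv1, -⟩ := Finset.mem_filter.1 hv
          exact SimpleGraph.mem_edgeFinset.2 (G.mem_edgeSet.2 (hnb hv1))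
        · intro a ha b hb he
          obtain ⟨ha1, ha2⟩ := Finset.mem_filter.1 (Finset.mem_coe.1 ha)
          obtain ⟨hb1, hb2⟩ := Finset.mem_filter.1 (Finset.mem_coe.1 hb)
          rcases Sym2.eq_iff.1 he with ⟨h1, h2⟩ | ⟨h1, h2⟩
          · exact h1
          · exfalso
            have hba : G.Adj b a := h1 ▸ hnb hb1
            exact (hK2 b a hba hb2) ha2
      have hsum2 : t + 2 * (p - t) ≤ 2 * m := by
        have hle : ∑ v ∈ sup, (if G.degree v = 1 then 1 else 2) ≤ ∑ v ∈ sup, G.degree v := by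
          refine Finset.sum_le_sum ?_
          intro v hv
          have h1 := hdegpos v hv
          by_cases hdv : G.degree v = 1
          · rw [if_pos hdv]; omega
          · rw [if_neg hdv]; omega
        have heval : ∑ v ∈ sup, (if G.degree v = 1 then 1 else 2) = t + 2 * (p - t) := by
          rw [← Finset.sum_filter_add_sum_filter_not sup (fun v => G.degree v = 1)]
          have e1 : ∑ v ∈ sup.filter (fun v => G.degree v = 1),
              (if G.degree v = 1 then 1 else 2) = t := by
            rw [Finset.sum_congr rfl (fun v hv => if_pos (Finset.mem_filter.1 hv).2),
              Finset.sum_const, smul_eq_mul, mul_one, htdef]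
          have e2 : ∑ v ∈ sup.filter (fun v => ¬ G.degree v = 1),
              (if G.degree v = 1 then 1 else 2) = 2 * (p - t) := by
            rw [Finset.sum_congr rfl (fun v hv => if_neg (Finset.mem_filter.1 hv).2),
              Finset.sum_const, smul_eq_mul]
            have hsplit := Finset.card_filter_add_card_filter_not
              (s := sup) (p := fun v => G.degree v = 1)
            rw [htdef, hpdef]
            omega
          rw [e1, e2]
        rw [heval, hsum] at hle
        exact hle
      rw [hd1', one_mul]
      omega
    · -- d ≥ 2
      have hpm : p ≤ m := by
        have h2p : 2 * p ≤ d * p := Nat.mul_le_mul_right p hd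
        have := le_trans h2p hdp
        omega
      have hq : d * (p - 1) + d ≤ 2 * m := by
        have heq : d * (p - 1) + d = d * p := by
          rw [← Nat.mul_succ]
          congr 1
          omega
        rw [heq]
        exact hdp
      generalize hg : d * (p - 1) = q at hq ⊢
      omega
  have hFS : F.card < S.card := by omega
  obtain ⟨y, hyS, hyF⟩ := exists_avoid hFS
  have hy_ne : ∀ {b : V}, b ∈ G'.support → f' b ≠ y := by
    intro b hb heq
    obtain ⟨hbs, hbw⟩ := hsupG'.1 hb
    apply hyF
    exact Finset.mem_union_left _
      (Finset.mem_image.2 ⟨b, Finset.mem_erase.2 ⟨hbw, hmem2 hbs⟩, heq⟩)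
  have hy_nadj : ∀ {b : V}, G.Adj w b → ¬ Γ.Adj (f' b) y := by
    intro b hb hadjy
    apply hyF
    exact Finset.mem_union_right _ (Finset.mem_biUnion.2
      ⟨b, (SimpleGraph.mem_neighborFinset G w b).2 hb,
        Finset.mem_inter.2 ⟨(SimpleGraph.mem_neighborFinset Γ (f' b) y).2 hadjy, hyS⟩⟩)
  refine ⟨Function.update f' w y, ?_, ?_, ?_⟩
  · intro a ha b hb hfe
    by_cases haw : a = w
    · obtain rfl := haw.symm
      by_cases hbw : b = w
      · exact hbw.symm
      · have hb' : b ∈ G'.support := hsupG'.2 ⟨hb, hbw⟩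
        rw [Function.update_self, Function.update_of_ne hbw] at hfe
        exact absurd hfe.symm (hy_ne hb')
    · by_cases hbw : b = w
      · obtain rfl := hbw.symm
        have ha' : a ∈ G'.support := hsupG'.2 ⟨ha, haw⟩
        rw [Function.update_of_ne haw, Function.update_self] at hfe
        exact absurd hfe (hy_ne ha')
      · rw [Function.update_of_ne haw, Function.update_of_ne hbw] at hfe
        exact hinj' (hsupG'.2 ⟨ha, haw⟩) (hsupG'.2 ⟨hb, hbw⟩) hfe
  · intro v hv
    by_cases hvw : v = w
    · obtain rfl := hvw.symm
      rw [Function.update_self]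
      exact hyS
    · rw [Function.update_of_ne hvw]
      exact hmem' v (hsupG'.2 ⟨hv, hvw⟩)
  · intro a b hab
    by_cases haw : a = w
    · obtain rfl := haw.symm
      have hbw : b ≠ w := fun h => G.irrefl (h ▸ hab)
      rw [Function.update_self, Function.update_of_ne hbw]
      exact fun h => hy_nadj hab h.symm
    · by_cases hbw : b = w
      · obtain rfl := hbw.symm
        rw [Function.update_of_ne haw, Function.update_self]
        exact hy_nadj hab.symm
      · rw [Function.update_of_ne haw, Function.update_of_ne hbw]
        exact hadj' (hadjG'.2 ⟨hab, haw, hbw⟩)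

theorem stmt_6 {β : Type} [Fintype β] (G : SimpleGraph β) (m : ℕ)
    (hm : G.edgeSet.ncard = m) (hm1 : 1 ≤ m) (hiso : ∀ v, ∃ w, G.Adj v w) :
    ramseyNumber (⊤ : SimpleGraph (Fin 3)) G ≤ 3 * m := by
  classical
  have h3 : 0 < 3 * m := by omega
  unfold ramseyNumber
  apply Nat.sInf_le
  refine ⟨h3, ?_⟩
  intro Γ
  by_cases hΓ : Γ.CliqueFree 3
  · right
    haveI : Nonempty (Fin (3 * m)) := ⟨⟨0, h3⟩⟩
    obtain ⟨f, hinj, hmem, hadj⟩ := key m G Γ hΓ Finset.univ hm (by simp)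
    have hsup : G.support = Set.univ :=
      Set.eq_univ_of_forall fun v => (G.mem_support).2 (hiso v)
    have hinj' : Function.Injective f := by
      have := hsup ▸ hinj
      exact fun a b hab => this (Set.mem_univ a) (Set.mem_univ b) hab
    refine ⟨⟨f, ?_⟩, hinj'⟩
    intro a b hab
    rw [SimpleGraph.compl_adj]
    exact ⟨fun he => hab.ne (hinj' he), hadj hab⟩
  · left
    obtain ⟨e⟩ := SimpleGraph.not_cliqueFree_iff 3 |>.1 hΓ
    exact ⟨e.toHom, e.injective⟩
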